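/- Let d ≥ 2, N = d², and let P be the N×d matrix with P_{j,k} = ((j+k−2) mod N) + 1. Then the maximum ranking distance of the linear-transformation family S_LT on P satisfies MRD(S_LT, P) ≥ sqrt( (N³ − N − d³ + 3d² − 2d) / 12 ). -/

import Mathlib

noncomputable section

/-- The alignment matrix `P` with `N = d²` rows: the `(j,k)` entry (0-based indices)
is `((j + k) % N) + 1`, i.e. `((j + k − 2) mod N) + 1` for 1-based indices. -/
def Pmat (d : ℕ) (j : Fin (d ^ 2)) (k : Fin d) : ℝ :=
  ((((j : ℕ) + (k : ℕ)) % d ^ 2 + 1 : ℕ) : ℝ)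

/-- The linear-transformation scoring family `S_LT = { x ↦ ⟨w, x⟩ }`. -/
def SLT (d : ℕ) : Set ((Fin d → ℝ) → ℝ) :=
  {s | ∃ w : Fin d → ℝ, s = fun x => ∑ k, w k * x k}

/-- Maximum ranking distance of a family `S` of scoring functions on the rows of `P`:
the maximum over permutations `π` of `{1,…,N}` of the infimum over `s ∈ S` of
`sqrt (Σ_j (s(P_j) − π⁻¹(j))²)`. -/
def MRD {d : ℕ} (S : Set ((Fin d → ℝ) → ℝ)) : ℝ :=
  ⨆ π : Equiv.Perm (Fin (d ^ 2)),
    ⨅ s : S,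
      Real.sqrt (∑ j : Fin (d ^ 2),
        (s.1 (fun k => Pmat d j k) - (((π.symm j : ℕ) : ℝ) + 1)) ^ 2)

open Finset

lemma slt_nonempty (d : ℕ) : Nonempty (SLT d) :=
  ⟨⟨fun x => ∑ k, (0:ℝ) * x k, ⟨fun _ => 0, rfl⟩⟩⟩

/-- The key abstract lemma: a certificate vector `c` orthogonal to the columns of `P`
together with a rank assignment `gn` gives a lower bound on `MRD`. -/
lemma mrd_key (d : ℕ) (hd : 2 ≤ d) (c : ℕ → ℝ) (t T : ℝ) (gn : ℕ → ℕ)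
    (hglt : ∀ j, j < d^2 → gn j < d^2)
    (hginj : ∀ j1 j2, j1 < d^2 → j2 < d^2 → gn j1 = gn j2 → j1 = j2)
    (h1 : ∑ j ∈ range (d^2), c j * ((j:ℝ)+1) = 0)
    (h2 : ∑ j ∈ range (d^2), c j = ((d:ℝ)^2) * t)
    (h3 : ∀ j, d^2 - d + 1 ≤ j → c j = t)
    (hS : 0 < ∑ j ∈ range (d^2), (c j)^2)
    (hQT : T * (∑ j ∈ range (d^2), (c j)^2)
        ≤ (∑ j ∈ range (d^2), c j * ((gn j : ℝ)+1))^2) :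
    Real.sqrt T ≤ MRD (SLT d) := by
  have hdN : d ≤ d^2 := by nlinarith
  -- build the permutation
  have hgBij : Function.Bijective (fun j : Fin (d^2) => (⟨gn j, hglt j j.2⟩ : Fin (d^2))) := by
    apply Finite.injective_iff_bijective.mp
    intro j1 j2 h
    exact Fin.ext (hginj _ _ j1.2 j2.2 (congrArg Fin.val h))
  set g : Equiv.Perm (Fin (d^2)) := Equiv.ofBijective _ hgBij with hgdef
  -- column orthogonality
  have hcol : ∀ k : Fin d, ∑ j : Fin (d^2), c j * Pmat d j k = 0 := by
    intro k
    have hkd : (k:ℕ) < d := k.2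
    have hkN : (k:ℕ) ≤ d^2 := le_trans (le_of_lt hkd) hdN
    have hconv : ∑ j : Fin (d^2), c j * Pmat d j k
        = ∑ j ∈ range (d^2), c j * (((j + (k:ℕ)) % d^2 + 1 : ℕ) : ℝ) :=
      Fin.sum_univ_eq_sum_range (fun j => c j * (((j + (k:ℕ)) % d^2 + 1 : ℕ) : ℝ)) (d^2)
    rw [hconv]
    have hsplit : ∀ j ∈ range (d^2), c j * (((j + (k:ℕ)) % d^2 + 1 : ℕ) : ℝ)
        = c j * ((j:ℝ) + (k:ℕ) + 1)
          - ((d:ℝ)^2) * (if d^2 ≤ j + (k:ℕ) then c j else 0) := by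
      intro j hj
      have hjN : j < d^2 := mem_range.mp hj
      by_cases hc : d^2 ≤ j + (k:ℕ)
      · have hmod : (j + (k:ℕ)) % d^2 = j + (k:ℕ) - d^2 := by
          rw [Nat.mod_eq_sub_mod hc]
          exact Nat.mod_eq_of_lt (by omega)
        rw [hmod, if_pos hc]
        push_cast [Nat.cast_sub hc]
        ring
      · have hmod : (j + (k:ℕ)) % d^2 = j + (k:ℕ) := Nat.mod_eq_of_lt (by omega)
        rw [hmod, if_neg hc]
        push_cast
        ring
    rw [sum_congr rfl hsplit, Finset.sum_sub_distrib]
    have hA : ∑ j ∈ range (d^2), c j * ((j:ℝ) + (k:ℕ) + 1)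
        = ((k:ℕ):ℝ) * (((d:ℝ)^2) * t) := by
      have : ∀ j ∈ range (d^2), c j * ((j:ℝ) + (k:ℕ) + 1)
          = c j * ((j:ℝ) + 1) + ((k:ℕ):ℝ) * c j := by
        intro j _; ring
      rw [sum_congr rfl this, Finset.sum_add_distrib, h1, ← Finset.mul_sum, h2]
      ring
    have hB : ∑ j ∈ range (d^2), (if d^2 ≤ j + (k:ℕ) then c j else 0)
        = ((k:ℕ):ℝ) * t := by
      have hc : ∀ j ∈ range (d^2), (if d^2 ≤ j + (k:ℕ) then c j else 0)
          = (if d^2 ≤ j + (k:ℕ) then t else 0) := by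
        intro j hj
        by_cases hcc : d^2 ≤ j + (k:ℕ)
        · rw [if_pos hcc, if_pos hcc, h3 j (by omega)]
        · rw [if_neg hcc, if_neg hcc]
      rw [sum_congr rfl hc, ← Finset.sum_filter]
      have hfil : filter (fun j => d^2 ≤ j + (k:ℕ)) (range (d^2)) = Finset.Ico (d^2 - (k:ℕ)) (d^2) := by
        ext j
        simp only [mem_filter, mem_range, Finset.mem_Ico]
        omega
      rw [hfil, Finset.sum_const, Nat.card_Ico]
      have : d^2 - (d^2 - (k:ℕ)) = (k:ℕ) := by omega
      rw [this]
      simp [mul_comm]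
    rw [hA, ← Finset.mul_sum, hB]
    ring
  -- the target
  rw [MRD]
  have hbdd : BddAbove (Set.range (fun π : Equiv.Perm (Fin (d^2)) =>
      ⨅ s : SLT d, Real.sqrt (∑ j : Fin (d^2),
        (s.1 (fun k => Pmat d j k) - (((π.symm j : ℕ) : ℝ) + 1)) ^ 2))) :=
    (Set.finite_range _).bddAbove
  refine le_trans ?_ (le_ciSup hbdd g.symm)
  have : Nonempty (SLT d) := slt_nonempty d
  apply le_ciInf
  intro s
  obtain ⟨w, hw⟩ := s.2
  apply Real.sqrt_le_sqrt
  have hsymm : ∀ j : Fin (d^2), ((g.symm.symm j : ℕ) : ℝ) = (gn (j:ℕ) : ℝ) := by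
    intro j
    simp [hgdef, Equiv.ofBijective_apply]
  have hsval : ∀ j : Fin (d^2), s.1 (fun k => Pmat d j k) = ∑ k, w k * Pmat d j k := by
    intro j; rw [hw]
  -- Cauchy-Schwarz
  set e : Fin (d^2) → ℝ := fun j => s.1 (fun k => Pmat d j k) - (((g.symm.symm j : ℕ) : ℝ) + 1) with hedef
  have hce : ∑ j : Fin (d^2), c j * e j
      = - ∑ j ∈ range (d^2), c j * ((gn j : ℝ)+1) := by
    have : ∀ j : Fin (d^2), c j * e j
        = (∑ k, w k * (c j * Pmat d j k)) - c j * ((gn (j:ℕ) : ℝ) + 1) := by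
      intro j
      rw [hedef]
      simp only [hsval, hsymm]
      rw [mul_sub]
      congr 1
      rw [Finset.mul_sum]
      exact sum_congr rfl (fun k _ => by ring)
    rw [Fintype.sum_congr _ _ this, Finset.sum_sub_distrib]
    rw [Finset.sum_comm]
    have hz : ∀ k : Fin d, ∑ j : Fin (d^2), w k * (c j * Pmat d j k) = 0 := by
      intro k
      rw [← Finset.mul_sum, hcol k, mul_zero]
    rw [Fintype.sum_congr _ _ hz]
    simp only [Finset.sum_const_zero, zero_sub, neg_inj]
    exact Fin.sum_univ_eq_sum_range (fun j => c j * ((gn j : ℝ)+1)) (d^2)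
  have hCS : (∑ j : Fin (d^2), c (j:ℕ) * e j) ^ 2
      ≤ (∑ j : Fin (d^2), (c (j:ℕ))^2) * ∑ j : Fin (d^2), (e j)^2 :=
    Finset.sum_mul_sq_le_sq_mul_sq univ (fun j : Fin (d^2) => c (j:ℕ)) e
  have hcsq : ∑ j : Fin (d^2), (c (j:ℕ))^2 = ∑ j ∈ range (d^2), (c j)^2 :=
    Fin.sum_univ_eq_sum_range (fun j => (c j)^2) (d^2)
  rw [hce] at hCS
  rw [neg_pow, hcsq] at hCS
  simp only [neg_neg, one_mul, neg_one_sq] at hCS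
  have hTS : T * (∑ j ∈ range (d^2), (c j)^2)
      ≤ (∑ j ∈ range (d^2), (c j)^2) * ∑ j : Fin (d^2), (e j)^2 :=
    le_trans hQT hCS
  have h' : (∑ j ∈ range (d^2), (c j)^2) * T
      ≤ (∑ j ∈ range (d^2), (c j)^2) * ∑ j : Fin (d^2), (e j)^2 := by linarith
  exact le_of_mul_le_mul_left h' hS


lemma sum_cast_id (n : ℕ) : ∑ i ∈ range n, (i:ℝ) = (n:ℝ)*((n:ℝ)-1)/2 := by
  induction n with
  | zero => simp
  | succ n ih => rw [Finset.sum_range_succ, ih]; push_cast; ring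

lemma sum_cast_sq (n : ℕ) : ∑ i ∈ range n, (i:ℝ)^2 = (n:ℝ)*((n:ℝ)-1)*(2*(n:ℝ)-1)/6 := by
  induction n with
  | zero => simp
  | succ n ih => rw [Finset.sum_range_succ, ih]; push_cast; ring

lemma sum_quad (n : ℕ) (α β γ : ℝ) :
    ∑ i ∈ range n, (α + β*(i:ℝ) + γ*(i:ℝ)^2)
      = (n:ℝ)*α + β*((n:ℝ)*((n:ℝ)-1)/2) + γ*((n:ℝ)*((n:ℝ)-1)*(2*(n:ℝ)-1)/6) := by
  rw [Finset.sum_add_distrib, Finset.sum_add_distrib, Finset.sum_const,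
    ← Finset.mul_sum, ← Finset.mul_sum, sum_cast_id, sum_cast_sq]
  simp [nsmul_eq_mul]

lemma parity_split (f : ℕ → ℝ) (p : ℕ) :
    ∑ j ∈ range (2*p+1), f j
      = ∑ i ∈ range (p+1), f (2*i) + ∑ i ∈ range p, f (2*i+1) := by
  induction p with
  | zero => simp
  | succ p ih =>
    have h1 : 2*(p+1)+1 = (2*p+1) + 1 + 1 := by ring
    rw [h1, Finset.sum_range_succ, Finset.sum_range_succ, ih,
      Finset.sum_range_succ (fun i => f (2*i)) (p+1), Finset.sum_range_succ (fun i => f (2*i+1)) p]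
    have e1 : 2*p+1+1 = 2*(p+1) := by ring
    have e2 : 2*p+1 = 2*p+1 := rfl
    rw [e1]
    ring

lemma range_split (a b : ℕ) (h : a ≤ b) (f : ℕ → ℝ) :
    ∑ j ∈ range b, f j = ∑ j ∈ range a, f j + ∑ j ∈ Finset.Ico a b, f j := by
  rw [Finset.range_eq_Ico, Finset.range_eq_Ico]
  exact (Finset.sum_Ico_consecutive f (Nat.zero_le a) h).symm

/-- the certificate vector -/
def cgen (p : ℕ) (A1 B1 A2 B2 t : ℝ) (j : ℕ) : ℝ :=
  if j < 2*p+1 then (if j % 2 = 0 then A1 + B1*((j/2 : ℕ):ℝ) else A2 + B2*((j/2 : ℕ):ℝ)) else t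

/-- the rank assignment -/
def ggen (p N j : ℕ) : ℕ :=
  if j < 2*p+1 then (if j % 2 = 0 then j/2 else N - 1 - j/2) else j - p

lemma cgen_even (p : ℕ) (A1 B1 A2 B2 t : ℝ) (i : ℕ) (hi : i ≤ p) :
    cgen p A1 B1 A2 B2 t (2*i) = A1 + B1*(i:ℝ) := by
  have h1 : 2*i < 2*p+1 := by omega
  have h2 : (2*i) % 2 = 0 := by omega
  have h3 : (2*i)/2 = i := by omega
  simp [cgen, h1, h2, h3]

lemma cgen_odd (p : ℕ) (A1 B1 A2 B2 t : ℝ) (i : ℕ) (hi : i < p) :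
    cgen p A1 B1 A2 B2 t (2*i+1) = A2 + B2*(i:ℝ) := by
  have h1 : 2*i+1 < 2*p+1 := by omega
  have h2 : ¬((2*i+1) % 2 = 0) := by omega
  have h3 : (2*i+1)/2 = i := by omega
  simp [cgen, h1, h2, h3]

lemma cgen_wrap (p : ℕ) (A1 B1 A2 B2 t : ℝ) (j : ℕ) (hj : 2*p+1 ≤ j) :
    cgen p A1 B1 A2 B2 t j = t := by
  simp [cgen, Nat.not_lt.mpr hj]

lemma ggen_even (p N i : ℕ) (hi : i ≤ p) : ggen p N (2*i) = i := by
  have h1 : 2*i < 2*p+1 := by omega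
  have h2 : (2*i) % 2 = 0 := by omega
  have h3 : (2*i)/2 = i := by omega
  simp [ggen, h1, h2, h3]

lemma ggen_odd (p N i : ℕ) (hi : i < p) : ggen p N (2*i+1) = N - 1 - i := by
  have h1 : 2*i+1 < 2*p+1 := by omega
  have h2 : ¬((2*i+1) % 2 = 0) := by omega
  have h3 : (2*i+1)/2 = i := by omega
  simp [ggen, h1, h2, h3]

lemma ggen_wrap (p N j : ℕ) (hj : 2*p+1 ≤ j) : ggen p N j = j - p := by
  simp [ggen, Nat.not_lt.mpr hj]

section sums

variable (p dd : ℕ) (A1 B1 A2 B2 t : ℝ)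

lemma wrap_card (hdd : 1 ≤ dd) : (2*p+dd) - (2*p+1) = dd - 1 := by omega

lemma sum_c (hdd : 1 ≤ dd) :
    ∑ j ∈ range (2*p+dd), cgen p A1 B1 A2 B2 t j
      = (((p:ℝ)+1)*A1 + B1*(((p:ℝ)+1)*(p:ℝ)/2)) + ((p:ℝ)*A2 + B2*((p:ℝ)*((p:ℝ)-1)/2))
        + ((dd:ℝ)-1)*t := by
  rw [range_split (2*p+1) (2*p+dd) (by omega), parity_split]
  have he : ∑ i ∈ range (p+1), cgen p A1 B1 A2 B2 t (2*i)
      = ((p:ℝ)+1)*A1 + B1*(((p:ℝ)+1)*(p:ℝ)/2) := by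
    have : ∀ i ∈ range (p+1), cgen p A1 B1 A2 B2 t (2*i) = A1 + B1*(i:ℝ) + 0*(i:ℝ)^2 := by
      intro i hi
      rw [cgen_even p A1 B1 A2 B2 t i (by simpa using Nat.lt_succ_iff.mp (mem_range.mp hi))]
      ring
    rw [sum_congr rfl this, sum_quad]
    all_goals try push_cast
    all_goals try ring
  have ho : ∑ i ∈ range p, cgen p A1 B1 A2 B2 t (2*i+1)
      = (p:ℝ)*A2 + B2*((p:ℝ)*((p:ℝ)-1)/2) := by
    have : ∀ i ∈ range p, cgen p A1 B1 A2 B2 t (2*i+1) = A2 + B2*(i:ℝ) + 0*(i:ℝ)^2 := by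
      intro i hi
      rw [cgen_odd p A1 B1 A2 B2 t i (mem_range.mp hi)]
      ring
    rw [sum_congr rfl this, sum_quad]
    all_goals try push_cast
    all_goals try ring
  have hw : ∑ j ∈ Finset.Ico (2*p+1) (2*p+dd), cgen p A1 B1 A2 B2 t j = ((dd:ℝ)-1)*t := by
    have : ∀ j ∈ Finset.Ico (2*p+1) (2*p+dd), cgen p A1 B1 A2 B2 t j = t := by
      intro j hj
      exact cgen_wrap _ _ _ _ _ _ _ (Finset.mem_Ico.mp hj).1
    rw [sum_congr rfl this, Finset.sum_const, Nat.card_Ico, wrap_card p dd hdd,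
      nsmul_eq_mul]
    push_cast [Nat.cast_sub hdd]
    ring
  rw [he, ho, hw]

lemma sum_c_j (hdd : 1 ≤ dd) :
    ∑ j ∈ range (2*p+dd), cgen p A1 B1 A2 B2 t j * ((j:ℝ)+1)
      = ((((p:ℝ)+1)*A1 + (2*A1+B1)*(((p:ℝ)+1)*(p:ℝ)/2) + 2*B1*(((p:ℝ)+1)*(p:ℝ)*(2*(p:ℝ)+1)/6)))
        + ((p:ℝ)*(2*A2) + (2*A2+2*B2)*((p:ℝ)*((p:ℝ)-1)/2) + 2*B2*((p:ℝ)*((p:ℝ)-1)*(2*(p:ℝ)-1)/6))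
        + t*(((dd:ℝ)-1)*(2*(p:ℝ)+2) + ((dd:ℝ)-1)*((dd:ℝ)-2)/2) := by
  rw [range_split (2*p+1) (2*p+dd) (by omega), parity_split]
  have he : ∑ i ∈ range (p+1), cgen p A1 B1 A2 B2 t (2*i) * (((2*i:ℕ):ℝ)+1)
      = ((p:ℝ)+1)*A1 + (2*A1+B1)*(((p:ℝ)+1)*(p:ℝ)/2) + 2*B1*(((p:ℝ)+1)*(p:ℝ)*(2*(p:ℝ)+1)/6) := by
    have : ∀ i ∈ range (p+1), cgen p A1 B1 A2 B2 t (2*i) * (((2*i:ℕ):ℝ)+1)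
        = A1 + (2*A1+B1)*(i:ℝ) + 2*B1*(i:ℝ)^2 := by
      intro i hi
      rw [cgen_even p A1 B1 A2 B2 t i (Nat.lt_succ_iff.mp (mem_range.mp hi))]
      push_cast
      ring
    rw [sum_congr rfl this, sum_quad]
    all_goals try push_cast
    all_goals try ring
  have ho : ∑ i ∈ range p, cgen p A1 B1 A2 B2 t (2*i+1) * (((2*i+1:ℕ):ℝ)+1)
      = (p:ℝ)*(2*A2) + (2*A2+2*B2)*((p:ℝ)*((p:ℝ)-1)/2) + 2*B2*((p:ℝ)*((p:ℝ)-1)*(2*(p:ℝ)-1)/6) := by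
    have : ∀ i ∈ range p, cgen p A1 B1 A2 B2 t (2*i+1) * (((2*i+1:ℕ):ℝ)+1)
        = 2*A2 + (2*A2+2*B2)*(i:ℝ) + 2*B2*(i:ℝ)^2 := by
      intro i hi
      rw [cgen_odd p A1 B1 A2 B2 t i (mem_range.mp hi)]
      push_cast
      ring
    rw [sum_congr rfl this, sum_quad]
    all_goals try push_cast
    all_goals try ring
  have hw : ∑ j ∈ Finset.Ico (2*p+1) (2*p+dd), cgen p A1 B1 A2 B2 t j * ((j:ℝ)+1)
      = t*(((dd:ℝ)-1)*(2*(p:ℝ)+2) + ((dd:ℝ)-1)*((dd:ℝ)-2)/2) := by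
    rw [Finset.sum_Ico_eq_sum_range]
    rw [wrap_card p dd hdd]
    have : ∀ i ∈ range (dd-1), cgen p A1 B1 A2 B2 t (2*p+1+i) * (((2*p+1+i:ℕ):ℝ)+1)
        = (t*(2*(p:ℝ)+2) + t*(i:ℝ) + 0*(i:ℝ)^2) := by
      intro i hi
      rw [cgen_wrap _ _ _ _ _ _ _ (by omega)]
      push_cast
      ring
    rw [sum_congr rfl this, sum_quad]
    push_cast [Nat.cast_sub hdd]
    ring
  rw [he, ho, hw]

lemma sum_c_sq (hdd : 1 ≤ dd) :
    ∑ j ∈ range (2*p+dd), (cgen p A1 B1 A2 B2 t j)^2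
      = (((p:ℝ)+1)*A1^2 + 2*A1*B1*(((p:ℝ)+1)*(p:ℝ)/2) + B1^2*(((p:ℝ)+1)*(p:ℝ)*(2*(p:ℝ)+1)/6))
        + ((p:ℝ)*A2^2 + 2*A2*B2*((p:ℝ)*((p:ℝ)-1)/2) + B2^2*((p:ℝ)*((p:ℝ)-1)*(2*(p:ℝ)-1)/6))
        + ((dd:ℝ)-1)*t^2 := by
  rw [range_split (2*p+1) (2*p+dd) (by omega), parity_split]
  have he : ∑ i ∈ range (p+1), (cgen p A1 B1 A2 B2 t (2*i))^2
      = ((p:ℝ)+1)*A1^2 + 2*A1*B1*(((p:ℝ)+1)*(p:ℝ)/2) + B1^2*(((p:ℝ)+1)*(p:ℝ)*(2*(p:ℝ)+1)/6) := by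
    have : ∀ i ∈ range (p+1), (cgen p A1 B1 A2 B2 t (2*i))^2
        = A1^2 + (2*A1*B1)*(i:ℝ) + B1^2*(i:ℝ)^2 := by
      intro i hi
      rw [cgen_even p A1 B1 A2 B2 t i (Nat.lt_succ_iff.mp (mem_range.mp hi))]
      ring
    rw [sum_congr rfl this, sum_quad]
    all_goals try push_cast
    all_goals try ring
  have ho : ∑ i ∈ range p, (cgen p A1 B1 A2 B2 t (2*i+1))^2
      = (p:ℝ)*A2^2 + 2*A2*B2*((p:ℝ)*((p:ℝ)-1)/2) + B2^2*((p:ℝ)*((p:ℝ)-1)*(2*(p:ℝ)-1)/6) := by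
    have : ∀ i ∈ range p, (cgen p A1 B1 A2 B2 t (2*i+1))^2
        = A2^2 + (2*A2*B2)*(i:ℝ) + B2^2*(i:ℝ)^2 := by
      intro i hi
      rw [cgen_odd p A1 B1 A2 B2 t i (mem_range.mp hi)]
      ring
    rw [sum_congr rfl this, sum_quad]
    all_goals try push_cast
    all_goals try ring
  have hw : ∑ j ∈ Finset.Ico (2*p+1) (2*p+dd), (cgen p A1 B1 A2 B2 t j)^2 = ((dd:ℝ)-1)*t^2 := by
    have : ∀ j ∈ Finset.Ico (2*p+1) (2*p+dd), (cgen p A1 B1 A2 B2 t j)^2 = t^2 := by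
      intro j hj
      rw [cgen_wrap _ _ _ _ _ _ _ (Finset.mem_Ico.mp hj).1]
    rw [sum_congr rfl this, Finset.sum_const, Nat.card_Ico, wrap_card p dd hdd, nsmul_eq_mul]
    push_cast [Nat.cast_sub hdd]
    ring
  rw [he, ho, hw]

lemma sum_c_rank (hdd : 1 ≤ dd) (hp : 1 ≤ p) :
    ∑ j ∈ range (2*p+dd), cgen p A1 B1 A2 B2 t j * (((ggen p (2*p+dd) j : ℕ):ℝ)+1)
      = (((p:ℝ)+1)*A1 + (A1+B1)*(((p:ℝ)+1)*(p:ℝ)/2) + B1*(((p:ℝ)+1)*(p:ℝ)*(2*(p:ℝ)+1)/6))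
        + ((p:ℝ)*(A2*(2*(p:ℝ)+(dd:ℝ))) + (B2*(2*(p:ℝ)+(dd:ℝ))-A2)*((p:ℝ)*((p:ℝ)-1)/2)
            - B2*((p:ℝ)*((p:ℝ)-1)*(2*(p:ℝ)-1)/6))
        + t*(((dd:ℝ)-1)*((p:ℝ)+2) + ((dd:ℝ)-1)*((dd:ℝ)-2)/2) := by
  rw [range_split (2*p+1) (2*p+dd) (by omega), parity_split]
  have he : ∑ i ∈ range (p+1), cgen p A1 B1 A2 B2 t (2*i) * (((ggen p (2*p+dd) (2*i) : ℕ):ℝ)+1)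
      = ((p:ℝ)+1)*A1 + (A1+B1)*(((p:ℝ)+1)*(p:ℝ)/2) + B1*(((p:ℝ)+1)*(p:ℝ)*(2*(p:ℝ)+1)/6) := by
    have : ∀ i ∈ range (p+1), cgen p A1 B1 A2 B2 t (2*i) * (((ggen p (2*p+dd) (2*i) : ℕ):ℝ)+1)
        = A1 + (A1+B1)*(i:ℝ) + B1*(i:ℝ)^2 := by
      intro i hi
      have hip : i ≤ p := Nat.lt_succ_iff.mp (mem_range.mp hi)
      rw [cgen_even p A1 B1 A2 B2 t i hip, ggen_even p (2*p+dd) i hip]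
      ring
    rw [sum_congr rfl this, sum_quad]
    all_goals try push_cast
    all_goals try ring
  have ho : ∑ i ∈ range p, cgen p A1 B1 A2 B2 t (2*i+1) * (((ggen p (2*p+dd) (2*i+1) : ℕ):ℝ)+1)
      = (p:ℝ)*(A2*(2*(p:ℝ)+(dd:ℝ))) + (B2*(2*(p:ℝ)+(dd:ℝ))-A2)*((p:ℝ)*((p:ℝ)-1)/2)
          - B2*((p:ℝ)*((p:ℝ)-1)*(2*(p:ℝ)-1)/6) := by
    have : ∀ i ∈ range p, cgen p A1 B1 A2 B2 t (2*i+1) * (((ggen p (2*p+dd) (2*i+1) : ℕ):ℝ)+1)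
        = A2*(2*(p:ℝ)+(dd:ℝ)) + (B2*(2*(p:ℝ)+(dd:ℝ))-A2)*(i:ℝ) + (-B2)*(i:ℝ)^2 := by
      intro i hi
      have hip : i < p := mem_range.mp hi
      rw [cgen_odd p A1 B1 A2 B2 t i hip, ggen_odd p (2*p+dd) i hip]
      have hcast : (((2*p+dd) - 1 - i : ℕ):ℝ) = 2*(p:ℝ)+(dd:ℝ)-1-(i:ℝ) := by
        have h1 : i + 1 ≤ 2*p+dd - 1 := by omega
        push_cast [Nat.cast_sub (by omega : 1 ≤ 2*p+dd), Nat.cast_sub (by omega : i ≤ 2*p+dd-1)]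
        ring
      rw [hcast]
      ring
    rw [sum_congr rfl this, sum_quad]
    all_goals try push_cast
    all_goals try ring
  have hw : ∑ j ∈ Finset.Ico (2*p+1) (2*p+dd),
        cgen p A1 B1 A2 B2 t j * (((ggen p (2*p+dd) j : ℕ):ℝ)+1)
      = t*(((dd:ℝ)-1)*((p:ℝ)+2) + ((dd:ℝ)-1)*((dd:ℝ)-2)/2) := by
    rw [Finset.sum_Ico_eq_sum_range, wrap_card p dd hdd]
    have : ∀ i ∈ range (dd-1), cgen p A1 B1 A2 B2 t (2*p+1+i) * (((ggen p (2*p+dd) (2*p+1+i) : ℕ):ℝ)+1)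
        = (t*((p:ℝ)+2) + t*(i:ℝ) + 0*(i:ℝ)^2) := by
      intro i hi
      rw [cgen_wrap _ _ _ _ _ _ _ (by omega), ggen_wrap _ _ _ (by omega)]
      have hcast : ((2*p+1+i - p : ℕ):ℝ) = (p:ℝ)+1+(i:ℝ) := by
        push_cast [Nat.cast_sub (by omega : p ≤ 2*p+1+i)]
        ring
      rw [hcast]
      ring
    rw [sum_congr rfl this, sum_quad]
    push_cast [Nat.cast_sub hdd]
    ring
  rw [he, ho, hw]

end sums

set_option maxHeartbeats 4000000 in
/-- MRD of linear transformation-based attention: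
`MRD(S_LT, P) ≥ sqrt((N³ − N − d³ + 3d² − 2d)/12)` where `N = d²`. -/
theorem mrd_linear_lower_bound (d : ℕ) (hd : 2 ≤ d) :
    Real.sqrt ((((d : ℝ) ^ 2) ^ 3 - (d : ℝ) ^ 2 - (d : ℝ) ^ 3 + 3 * (d : ℝ) ^ 2 - 2 * (d : ℝ)) / 12)
      ≤ MRD (SLT d) := by
  rcases eq_or_lt_of_le hd with hd2 | hd3
  · -- d = 2
    subst hd2
    apply mrd_key 2 le_rfl
      (fun j => if j = 0 then (159:ℝ) else if j = 1 then 7 else if j = 2 then -91 else 25)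
      25 _ (fun j => if j = 0 then 3 else if j = 1 then 1 else if j = 2 then 0 else 2)
    · intro j hj
      norm_num at hj
      interval_cases j <;> norm_num
    · intro j1 j2 h1 h2 h
      norm_num at h1 h2
      interval_cases j1 <;> interval_cases j2 <;> simp_all
    · show ∑ j ∈ range 4, _ = (0:ℝ)
      rw [Finset.sum_range_succ, Finset.sum_range_succ, Finset.sum_range_succ,
        Finset.sum_range_succ]
      norm_num
    · show ∑ j ∈ range 4, _ = ((2:ℝ)^2) * 25
      rw [Finset.sum_range_succ, Finset.sum_range_succ, Finset.sum_range_succ,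
        Finset.sum_range_succ]
      norm_num
    · intro j hj
      norm_num at hj
      have h0 : j ≠ 0 := by omega
      have h1 : j ≠ 1 := by omega
      have h2 : j ≠ 2 := by omega
      simp [h0, h1, h2]
    · show (0:ℝ) < ∑ j ∈ range 4, _
      rw [Finset.sum_range_succ, Finset.sum_range_succ, Finset.sum_range_succ,
        Finset.sum_range_succ]
      norm_num
    · show _ * (∑ j ∈ range 4, _) ≤ (∑ j ∈ range 4, _)^2
      rw [Finset.sum_range_succ, Finset.sum_range_succ, Finset.sum_range_succ,
        Finset.sum_range_succ, Finset.sum_range_succ, Finset.sum_range_succ,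
        Finset.sum_range_succ, Finset.sum_range_succ]
      norm_num
  · -- d ≥ 3
    have hd3' : 3 ≤ d := hd3
    have hdvd : 2 ∣ d * (d-1) := by
      rcases Nat.even_or_odd d with h | h
      · exact Dvd.dvd.mul_right h.two_dvd _
      · have : Even (d-1) := by
          rcases h with ⟨k, hk⟩
          exact ⟨k, by omega⟩
        exact Dvd.dvd.mul_left this.two_dvd _
    obtain ⟨p, hp2⟩ : ∃ p, 2 * p = d * (d-1) := ⟨d * (d-1) / 2, Nat.mul_div_cancel' hdvd⟩
    have hmul : d * (d-1) + d = d*d := by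
      zify [show 1 ≤ d by omega]
      ring
    have hN : d^2 = 2*p + d := by rw [sq d, ← hmul, hp2]
    have hp1 : 1 ≤ p := by
      have h6 : 3*2 ≤ d*(d-1) := Nat.mul_le_mul hd3' (by omega)
      have h6' : 6 ≤ 2*p := by rw [hp2]; exact h6
      omega
    have hPr : (p:ℝ) = ((d:ℝ)^2 - (d:ℝ))/2 := by
      have h1 : ((2*p : ℕ):ℝ) = ((d*(d-1) : ℕ):ℝ) := by rw [hp2]
      push_cast [Nat.cast_sub (show 1 ≤ d by omega)] at h1
      nlinarith [h1]
    obtain ⟨x, hx0, hdx⟩ : ∃ x : ℝ, 0 ≤ x ∧ (d:ℝ) = x + 3 :=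
      ⟨(d:ℝ) - 3, by
        have : (3:ℝ) ≤ (d:ℝ) := by exact_mod_cast hd3'
        constructor <;> [linarith; ring]⟩
    -- the constants
    set Dq : ℝ := 3*((d:ℝ)-1)*(4*(p:ℝ)+(d:ℝ)+2) + 6*((p:ℝ)+1)*(2*(p:ℝ)+1) with hDq
    set tq : ℝ := (p:ℝ)*((p:ℝ)+1)*(14*(p:ℝ)-2) with htq
    set A1 : ℝ := -40*(p:ℝ) with hA1
    set B1 : ℝ := -4*Dq with hB1
    set A2 : ℝ := (2*(p:ℝ)+1)*((p:ℝ)+1)*(14*(p:ℝ)-2) + 2*((p:ℝ)+1)*Dq + 5*((p:ℝ)-1)*Dq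
        + 40*((p:ℝ)+1) with hA2
    set B2 : ℝ := -10*Dq with hB2
    apply mrd_key d hd (cgen p A1 B1 A2 B2 tq) tq _ (ggen p (d^2))
    · intro j hj
      rw [hN] at hj ⊢
      unfold ggen
      split_ifs <;> omega
    · intro j1 j2 h1 h2 h
      rw [hN] at h1 h2
      rw [hN] at h
      unfold ggen at h
      split_ifs at h <;> omega
    · rw [hN, sum_c_j p d A1 B1 A2 B2 tq (by omega)]
      rw [htq, hA2, hB2, hB1, hA1, hDq, hPr]
      ring
    · rw [hN, sum_c p d A1 B1 A2 B2 tq (by omega)]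
      rw [htq, hA2, hB2, hB1, hA1, hDq, hPr]
      ring
    · intro j hj
      apply cgen_wrap
      rw [hN] at hj
      omega
    · rw [hN, sum_c_sq p d A1 B1 A2 B2 tq (by omega)]
      rw [htq, hA2, hB2, hB1, hA1, hDq, hPr, hdx]
      have hm : ∀ n : ℕ, (0:ℝ) ≤ x^n := fun n => pow_nonneg hx0 n
      have hpos : (0:ℝ) < (68484000:ℝ) + (328486780:ℝ)*x + (736688699:ℝ)*x^2 + (2046754607/2:ℝ)*x^3 + (3933735235/4:ℝ)*x^4 + (5531187027/8:ℝ)*x^5 + (1466679639/4:ℝ)*x^6 + (2383946637/16:ℝ)*x^7 + (93228405/2:ℝ)*x^8 + (178768749/16:ℝ)*x^9 + (8079019/4:ℝ)*x^10 + (4272407/16:ℝ)*x^11 + (97635/4:ℝ)*x^12 + (22097/16:ℝ)*x^13 + (73/2:ℝ)*x^14 := by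
        have h1 := hm 1; have h2 := hm 2; have h3 := hm 3; have h4 := hm 4
        have h5 := hm 5; have h6 := hm 6; have h7 := hm 7; have h8 := hm 8
        have h9 := hm 9; have h10 := hm 10; have h11 := hm 11; have h12 := hm 12
        have h13 := hm 13; have h14 := hm 14
        linarith
      linarith [hpos]
    · rw [hN, sum_c_sq p d A1 B1 A2 B2 tq (by omega),
        sum_c_rank p d A1 B1 A2 B2 tq (by omega) hp1]
      rw [htq, hA2, hB2, hB1, hA1, hDq, hPr, hdx]
      have hm : ∀ n : ℕ, (0:ℝ) ≤ x^n := fun n => pow_nonneg hx0 n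
      have hpos : (0:ℝ) ≤ (886995600:ℝ) + (6760796710:ℝ)*x + (145422137353/6:ℝ)*x^2 + (163460270867/3:ℝ)*x^3 + (4142990540543/48:ℝ)*x^4 + (2461227469513/24:ℝ)*x^5 + (1139032971563/12:ℝ)*x^6 + (280540430543/4:ℝ)*x^7 + (32286044079703/768:ℝ)*x^8 + (3965078175995/192:ℝ)*x^9 + (1605573182411/192:ℝ)*x^10 + (134242409879/48:ℝ)*x^11 + (296176804141/384:ℝ)*x^12 + (11166112195/64:ℝ)*x^13 + (2051637573/64:ℝ)*x^14 + (301489175/64:ℝ)*x^15 + (138409949/256:ℝ)*x^16 + (747297/16:ℝ)*x^17 + (45707/16:ℝ)*x^18 + (21175/192:ℝ)*x^19 + (97/48:ℝ)*x^20 := by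
        have h1 := hm 1; have h2 := hm 2; have h3 := hm 3; have h4 := hm 4
        have h5 := hm 5; have h6 := hm 6; have h7 := hm 7; have h8 := hm 8
        have h9 := hm 9; have h10 := hm 10; have h11 := hm 11; have h12 := hm 12
        have h13 := hm 13; have h14 := hm 14; have h15 := hm 15; have h16 := hm 16
        have h17 := hm 17; have h18 := hm 18; have h19 := hm 19; have h20 := hm 20
        linarith
      linarith [hpos]

end
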